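/- In the KKT system for Problem P3, the multiplier ranges are: p_i = 1 iff ω ≤ f_i B_i/(1 - A_i + B_i)², with μ_i = [f_i B_i/(1 - A_i + B_i)² - ω]^+; 0 < p_i < 1 iff f_i B_i/(1 - A_i + B_i)² < ω < f_i/B_i, with μ_i = 0; and p_i = 0 iff ω ≥ f_i/B_i, with μ_i = 0. -/

import Mathlib

open Real

/-- Multiplier ranges in the KKT system of Problem P3 (single content, index dropped).
Given stationarity f B/((1-A)p+B)² = ω + μ, complementary slackness μ(p-1) = 0,
with p ∈ [0,1], μ ≥ 0, ω > 0, 0 < A < 1, B > A: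
p = 1 iff ω ≤ f B/(1-A+B)² (and then μ = [f B/(1-A+B)² - ω]^+),
0 < p < 1 iff f B/(1-A+B)² < ω < f/B (and then μ = 0),
p = 0 iff ω ≥ f/B (and then μ = 0). -/
theorem P3_multiplier_ranges (f A B ω μ p : ℝ)
    (hf : 0 < f) (hA0 : 0 < A) (hA1 : A < 1) (hBA : A < B)
    (hω : 0 < ω) (hμ : 0 ≤ μ) (hp0 : 0 ≤ p) (hp1 : p ≤ 1)
    (hstat : f * B / ((1 - A) * p + B) ^ 2 = ω + μ)
    (hcs : μ * (p - 1) = 0) :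
    ((p = 1 ↔ ω ≤ f * B / (1 - A + B) ^ 2) ∧
      (p = 1 → μ = max (f * B / (1 - A + B) ^ 2 - ω) 0)) ∧
    ((0 < p ∧ p < 1 ↔ f * B / (1 - A + B) ^ 2 < ω ∧ ω < f / B) ∧
      (0 < p ∧ p < 1 → μ = 0)) ∧
    ((p = 0 ↔ f / B ≤ ω) ∧ (p = 0 → μ = 0)) := by
  have hB : 0 < B := hA0.trans hBA
  have hfB : 0 < f * B := mul_pos hf hB
  have hD : 0 < (1 - A) * p + B := by nlinarith
  have hD2 : 0 < ((1 - A) * p + B) ^ 2 := pow_pos hD 2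
  have hE : 0 < 1 - A + B := by nlinarith
  have hE2 : 0 < (1 - A + B) ^ 2 := pow_pos hE 2
  have hK1ltK0 : f * B / (1 - A + B) ^ 2 < f / B := by
    have h : B ^ 2 < (1 - A + B) ^ 2 := by nlinarith
    have := div_lt_div_of_pos_left hfB (pow_pos hB 2) h
    calc f * B / (1 - A + B) ^ 2 < f * B / B ^ 2 := this
      _ = f / B := by field_simp
  -- p < 1 case: value strictly above K1
  have hlt1 : p < 1 → f * B / (1 - A + B) ^ 2 < f * B / ((1 - A) * p + B) ^ 2 := by
    intro h
    apply div_lt_div_of_pos_left hfB hD2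
    have hlin : (1 - A) * p + B < 1 - A + B := by nlinarith
    exact pow_lt_pow_left₀ hlin (le_of_lt hD) (by norm_num)
  have hgt0 : 0 < p → f * B / ((1 - A) * p + B) ^ 2 < f / B := by
    intro h
    have hlin : B < (1 - A) * p + B := by nlinarith
    have hs : B ^ 2 < ((1 - A) * p + B) ^ 2 :=
      pow_lt_pow_left₀ hlin (le_of_lt hB) (by norm_num)
    have := div_lt_div_of_pos_left hfB (pow_pos hB 2) hs
    calc f * B / ((1 - A) * p + B) ^ 2 < f * B / B ^ 2 := this
      _ = f / B := by field_simp
  have hmu0 : p < 1 → μ = 0 := by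
    intro h
    rcases mul_eq_zero.mp hcs with h' | h'
    · exact h'
    · linarith
  constructor
  · constructor
    · constructor
      · intro h1
        have : f * B / ((1 - A) * p + B) ^ 2 = f * B / (1 - A + B) ^ 2 := by
          rw [h1]; ring_nf
        linarith [hstat ▸ this]
      · intro hle
        by_contra hne
        have hplt : p < 1 := lt_of_le_of_ne hp1 hne
        have hm := hmu0 hplt
        have hl := hlt1 hplt
        rw [hstat, hm] at hl
        linarith
    · intro h1
      have heq : f * B / ((1 - A) * p + B) ^ 2 = f * B / (1 - A + B) ^ 2 := by
        rw [h1]; ring_nf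
      have : f * B / (1 - A + B) ^ 2 - ω = μ := by linarith [heq ▸ hstat]
      rw [this, max_eq_left hμ]
  · constructor
    · constructor
      · constructor
        · rintro ⟨hpgt, hplt⟩
          have hm := hmu0 hplt
          rw [hm, add_zero] at hstat
          exact ⟨hstat ▸ hlt1 hplt, hstat ▸ hgt0 hpgt⟩
        · rintro ⟨h1, h2⟩
          have hne1 : p ≠ 1 := by
            intro h
            have heq : f * B / ((1 - A) * p + B) ^ 2 = f * B / (1 - A + B) ^ 2 := by
              rw [h]; ring_nf
            rw [heq] at hstat
            linarith
          have hne0 : p ≠ 0 := by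
            intro h
            have hm := hmu0 (lt_of_le_of_ne hp1 hne1)
            rw [h, hm, add_zero] at hstat
            have : f * B / ((1 - A) * 0 + B) ^ 2 = f / B := by
              rw [mul_zero, zero_add]; field_simp
            linarith [this ▸ hstat]
          exact ⟨lt_of_le_of_ne hp0 (Ne.symm hne0), lt_of_le_of_ne hp1 hne1⟩
      · rintro ⟨_, hplt⟩
        exact hmu0 hplt
    · constructor
      · constructor
        · intro h0
          have hm := hmu0 (by linarith : p < 1)
          rw [h0, hm, add_zero] at hstat
          have : f * B / ((1 - A) * 0 + B) ^ 2 = f / B := by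
            rw [mul_zero, zero_add]; field_simp
          linarith [this ▸ hstat]
        · intro hge
          by_contra hne
          have hpgt : 0 < p := lt_of_le_of_ne hp0 (Ne.symm hne)
          rcases eq_or_lt_of_le hp1 with h1 | h1
          · have heq : f * B / ((1 - A) * p + B) ^ 2 = f * B / (1 - A + B) ^ 2 := by
              rw [h1]; ring_nf
            rw [heq] at hstat
            linarith
          · have hm := hmu0 h1
            rw [hm, add_zero] at hstat
            linarith [hstat ▸ hgt0 hpgt]
      · intro h0
        exact hmu0 (by linarith : p < 1)
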